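/- Let H_1 ∈ F_2^{r_1×n_1} and H_2 ∈ F_2^{r_2×n_2}, and suppose the transpose H_1^T is (γ, δ)-expanding with δ < 1/4 (in particular every column of H_1^T has the same weight). Define the matrix D̃_Z = ( H_1 ⊗ I_{n_2} | I_{r_1} ⊗ H_2^T ) ∈ F_2^{(r_1 n_2)×(n_1 n_2 + r_1 r_2)}. Then for every h ∈ F_2^{r_1 n_2}, the vector f = D̃_Z^T h ∈ F_2^{n_1 n_2 + r_1 r_2} satisfies |f| ≥ min{ |h|^r_{I_{r_1}⊗H_2} , d(H_1^T) , γ·r_1 }, where |h|^r_{I_{r_1}⊗H_2} = min{ |h'| : (I_{r_1}⊗H_2) h' = (I_{r_1}⊗H_2) h } and d(H_1^T) = min{ |w| : w ∈ F_2^{r_1}, w ≠ 0, H_1^T w = 0 } (this term being +∞, i.e. omitted from the minimum, when H_1^T has trivial kernel). -/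

import Mathlib

open Matrix Kronecker
open scoped ENNReal

namespace HGPaux

lemma two_ne : (1 : ZMod 2) ≠ 0 := by decide

lemma zmod2_cases : ∀ a : ZMod 2, a ≠ 0 → a = 1 := by decide

lemma zmod2_self_add (a : ZMod 2) : a + a = 0 := by revert a; decide

lemma hn_add_le {n : ℕ} (a b : Fin n → ZMod 2) :
    hammingNorm (a + b) ≤ hammingNorm a + hammingNorm b := by
  classical
  unfold hammingNorm
  calc (Finset.univ.filter fun i => (a + b) i ≠ 0).card
      ≤ ((Finset.univ.filter fun i => a i ≠ 0) ∪ (Finset.univ.filter fun i => b i ≠ 0)).card := by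
        apply Finset.card_le_card
        intro i hi
        simp only [Finset.mem_filter, Finset.mem_union, Finset.mem_univ, true_and] at *
        by_contra hc
        push_neg at hc
        simp [Pi.add_apply, hc.1, hc.2] at hi
    _ ≤ _ := Finset.card_union_le _ _

variable {r₂ n₂ : ℕ} (H₂ : Matrix (Fin r₂) (Fin n₂) (ZMod 2))

/-- reduced weight w.r.t. `H₂` -/
noncomputable def rho (v : Fin n₂ → ZMod 2) : ℕ :=
  sInf {w | ∃ v', H₂.mulVec v' = H₂.mulVec v ∧ hammingNorm v' = w}

lemma rho_spec (v : Fin n₂ → ZMod 2) :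
    ∃ g, H₂.mulVec g = H₂.mulVec v ∧ hammingNorm g = rho H₂ v := by
  have hne : {w | ∃ v', H₂.mulVec v' = H₂.mulVec v ∧ hammingNorm v' = w}.Nonempty :=
    ⟨hammingNorm v, v, rfl, rfl⟩
  exact Nat.sInf_mem hne

lemma rho_le (v v' : Fin n₂ → ZMod 2) (hv : H₂.mulVec v' = H₂.mulVec v) :
    rho H₂ v ≤ hammingNorm v' :=
  Nat.sInf_le ⟨v', hv, rfl⟩

lemma rho_le_norm (v : Fin n₂ → ZMod 2) : rho H₂ v ≤ hammingNorm v :=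
  rho_le H₂ v v rfl

lemma rho_congr {v w : Fin n₂ → ZMod 2} (hvw : H₂.mulVec v = H₂.mulVec w) :
    rho H₂ v = rho H₂ w := by
  unfold rho; rw [hvw]

lemma rho_zero {v : Fin n₂ → ZMod 2} (hv : H₂.mulVec v = 0) : rho H₂ v = 0 := by
  have := rho_le H₂ v 0 (by rw [Matrix.mulVec_zero, hv])
  simpa using this

lemma rho_add_le (v w : Fin n₂ → ZMod 2) : rho H₂ (v + w) ≤ rho H₂ v + rho H₂ w := by
  obtain ⟨gv, hgv, hgv2⟩ := rho_spec H₂ v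
  obtain ⟨gw, hgw, hgw2⟩ := rho_spec H₂ w
  calc rho H₂ (v + w) ≤ hammingNorm (gv + gw) :=
        rho_le H₂ _ _ (by rw [Matrix.mulVec_add, Matrix.mulVec_add, hgv, hgw])
    _ ≤ hammingNorm gv + hammingNorm gw := hn_add_le _ _
    _ = _ := by rw [hgv2, hgw2]

variable {r₁ n₁ : ℕ}

/-- the "A" map: row version of `H₁ᵀ ⊗ 1` applied to `h`. -/
def Amap (M : Matrix (Fin n₁) (Fin r₁) (ZMod 2)) (h : Fin r₁ → Fin n₂ → ZMod 2)
    (j : Fin n₁) : Fin n₂ → ZMod 2 :=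
  ∑ i, M j i • h i

open Classical in
/-- pigeonhole / unique-neighbor picking lemma -/
lemma pick (M : Matrix (Fin n₁) (Fin r₁) (ZMod 2)) (γ δ : ℝ) (Δ : ℕ)
    (hδ : δ < 1 / 4) (hΔ : 1 ≤ Δ)
    (hreg : ∀ i : Fin r₁, hammingNorm (fun j : Fin n₁ => M j i) = Δ)
    (hexp : ∀ S : Finset (Fin r₁), (S.card : ℝ) ≤ γ * r₁ →
      (1 - δ) * Δ * S.card ≤
        ((Finset.univ.filter fun j : Fin n₁ => ∃ i ∈ S, M j i ≠ 0).card : ℝ))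
    (T : Finset (Fin r₁)) (hTne : T.Nonempty) (hTcard : (T.card : ℝ) ≤ γ * r₁) :
    ∃ i₀ ∈ T, Δ + 1 ≤ 2 * (Finset.univ.filter fun j : Fin n₁ =>
      M j i₀ ≠ 0 ∧ ∀ i ∈ T, i ≠ i₀ → M j i = 0).card := by
  classical
  set d : Fin n₁ → ℕ := fun j => (T.filter fun i => M j i ≠ 0).card with hd
  set Γ : Finset (Fin n₁) := Finset.univ.filter (fun j => ∃ i ∈ T, M j i ≠ 0) with hΓ
  set U₁ : Finset (Fin n₁) := Finset.univ.filter (fun j => d j = 1) with hU₁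
  have hsum : ∑ j, d j = Δ * T.card := by
    have h1 : ∑ j, d j = ∑ j, ∑ i ∈ T, (if M j i ≠ 0 then 1 else 0) := by
      simp [hd, Finset.card_filter]
    rw [h1, Finset.sum_comm]
    have h2 : ∀ i ∈ T, (∑ j, if M j i ≠ 0 then 1 else 0) = Δ := by
      intro i _
      rw [← Finset.card_filter]
      exact hreg i
    rw [Finset.sum_congr rfl h2, Finset.sum_const, smul_eq_mul, mul_comm]
  have hkey : 2 * Γ.card ≤ Δ * T.card + U₁.card := by
    have h1 : ∀ j ∈ Γ, 2 ≤ d j + (if d j = 1 then 1 else 0) := by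
      intro j hj
      have h2 : 1 ≤ d j := by
        rw [hΓ, Finset.mem_filter] at hj
        obtain ⟨_, i, hi, hMi⟩ := hj
        exact Finset.card_pos.mpr ⟨i, Finset.mem_filter.mpr ⟨hi, hMi⟩⟩
      by_cases h3 : d j = 1
      · simp [h3]
      · simp only [h3, if_false]; omega
    calc 2 * Γ.card = ∑ _j ∈ Γ, 2 := by rw [Finset.sum_const]; ring
      _ ≤ ∑ j ∈ Γ, (d j + if d j = 1 then 1 else 0) := Finset.sum_le_sum h1
      _ ≤ ∑ j, (d j + if d j = 1 then 1 else 0) :=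
          Finset.sum_le_sum_of_subset (Finset.subset_univ _)
      _ = ∑ j, d j + ∑ j, (if d j = 1 then 1 else 0) := Finset.sum_add_distrib
      _ = Δ * T.card + U₁.card := by rw [hsum, ← Finset.card_filter]
  have hΓbd : (1 - δ) * Δ * T.card ≤ (Γ.card : ℝ) := hexp T hTcard
  have hTpos : (0 : ℝ) < T.card := by
    have := hTne.card_pos
    exact_mod_cast this
  have hΔpos : (0 : ℝ) < Δ := by exact_mod_cast hΔ
  have hkeyR : 2 * (Γ.card : ℝ) ≤ Δ * T.card + U₁.card := by exact_mod_cast hkey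
  have hrealR : (Δ : ℝ) * T.card < 2 * U₁.card := by
    nlinarith [mul_pos hΔpos hTpos]
  have hreal : Δ * T.card < 2 * U₁.card := by exact_mod_cast hrealR
  set Uof : Fin r₁ → Finset (Fin n₁) := fun i₀ => Finset.univ.filter fun j =>
      M j i₀ ≠ 0 ∧ ∀ i ∈ T, i ≠ i₀ → M j i = 0 with hUof
  have hsub : U₁ ⊆ T.biUnion Uof := by
    intro j hj
    rw [hU₁, Finset.mem_filter] at hj
    obtain ⟨i, hi⟩ := Finset.card_eq_one.mp hj.2
    have hiT : i ∈ T ∧ M j i ≠ 0 := by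
      have : i ∈ T.filter fun i => M j i ≠ 0 := by rw [hi]; exact Finset.mem_singleton_self i
      exact Finset.mem_filter.mp this
    refine Finset.mem_biUnion.mpr ⟨i, hiT.1, ?_⟩
    rw [hUof]
    refine Finset.mem_filter.mpr ⟨Finset.mem_univ _, hiT.2, ?_⟩
    intro i' hi'T hne
    by_contra hc
    have : i' ∈ T.filter fun i => M j i ≠ 0 := Finset.mem_filter.mpr ⟨hi'T, hc⟩
    rw [hi, Finset.mem_singleton] at this
    exact hne this
  have hchain : Δ * T.card < ∑ i ∈ T, 2 * (Uof i).card := by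
    calc Δ * T.card < 2 * U₁.card := hreal
      _ ≤ 2 * (T.biUnion Uof).card := by
          exact Nat.mul_le_mul_left 2 (Finset.card_le_card hsub)
      _ ≤ 2 * ∑ i ∈ T, (Uof i).card := Nat.mul_le_mul_left 2 Finset.card_biUnion_le
      _ = ∑ i ∈ T, 2 * (Uof i).card := by rw [Finset.mul_sum]
  have hconst : ∑ _i ∈ T, Δ = Δ * T.card := by rw [Finset.sum_const, smul_eq_mul, mul_comm]
  have hchain2 : ∑ _i ∈ T, Δ < ∑ i ∈ T, 2 * (Uof i).card := by rw [hconst]; exact hchain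
  obtain ⟨i₀, hi₀T, hi₀⟩ := Finset.exists_lt_of_sum_lt hchain2
  refine ⟨i₀, hi₀T, ?_⟩
  have h9 : (Finset.univ.filter fun j : Fin n₁ =>
      M j i₀ ≠ 0 ∧ ∀ i ∈ T, i ≠ i₀ → M j i = 0).card = (Uof i₀).card := by
    simp only [hUof]
  omega

open Classical in
/-- Main inductive lemma. -/
lemma main (M : Matrix (Fin n₁) (Fin r₁) (ZMod 2)) (γ δ : ℝ) (Δ : ℕ)
    (hδ : δ < 1 / 4) (hΔ : 1 ≤ Δ)
    (hreg : ∀ i : Fin r₁, hammingNorm (fun j : Fin n₁ => M j i) = Δ)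
    (hexp : ∀ S : Finset (Fin r₁), (S.card : ℝ) ≤ γ * r₁ →
      (1 - δ) * Δ * S.card ≤
        ((Finset.univ.filter fun j : Fin n₁ => ∃ i ∈ S, M j i ≠ 0).card : ℝ)) :
    ∀ n : ℕ, ∀ h : Fin r₁ → Fin n₂ → ZMod 2,
      (Finset.univ.filter fun i => H₂.mulVec (h i) ≠ 0).card ≤ n →
      ((Finset.univ.filter fun i => H₂.mulVec (h i) ≠ 0).card : ℝ) ≤ γ * r₁ →
      ∑ i, rho H₂ (h i) ≤ ∑ j, rho H₂ (Amap M h j) := by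
  classical
  intro n
  induction n with
  | zero =>
      intro h hn _
      have hT : ∀ i, H₂.mulVec (h i) = 0 := by
        intro i
        by_contra hc
        have : i ∈ Finset.univ.filter fun i => H₂.mulVec (h i) ≠ 0 :=
          Finset.mem_filter.mpr ⟨Finset.mem_univ _, hc⟩
        have := Finset.card_pos.mpr ⟨i, this⟩
        omega
      have : ∀ i, rho H₂ (h i) = 0 := fun i => rho_zero H₂ (hT i)
      simp [this]
  | succ n IH =>
      intro h hn hcard
      set T : Finset (Fin r₁) := Finset.univ.filter fun i => H₂.mulVec (h i) ≠ 0 with hT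
      by_cases hTne : T.Nonempty
      swap
      · -- empty case
        rw [Finset.not_nonempty_iff_eq_empty] at hTne
        have hz : ∀ i, H₂.mulVec (h i) = 0 := by
          intro i
          by_contra hc
          have : i ∈ T := Finset.mem_filter.mpr ⟨Finset.mem_univ _, hc⟩
          simp [hTne] at this
        have : ∀ i, rho H₂ (h i) = 0 := fun i => rho_zero H₂ (hz i)
        simp [this]
      -- main step
      obtain ⟨i₀, hi₀T, hUcard⟩ := pick M γ δ Δ hδ hΔ hreg hexp T hTne hcard
      set U : Finset (Fin n₁) := Finset.univ.filter fun j =>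
        M j i₀ ≠ 0 ∧ ∀ i ∈ T, i ≠ i₀ → M j i = 0 with hU
      set Nbr : Finset (Fin n₁) := Finset.univ.filter fun j => M j i₀ ≠ 0 with hNbr
      have hUsub : U ⊆ Nbr := by
        intro j hj
        rw [hU, Finset.mem_filter] at hj
        exact Finset.mem_filter.mpr ⟨Finset.mem_univ _, hj.2.1⟩
      have hNbrcard : Nbr.card = Δ := hreg i₀
      have hUle : U.card ≤ Δ := hNbrcard ▸ Finset.card_le_card hUsub
      obtain ⟨g, hg, hgnorm⟩ := rho_spec H₂ (h i₀)
      set ρs := rho H₂ (h i₀) with hρs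
      have hρg : rho H₂ g = ρs := rho_congr H₂ hg
      set h' : Fin r₁ → Fin n₂ → ZMod 2 := Function.update h i₀ (h i₀ + g) with hh'
      have hupd : ∀ i, h' i = h i + (if i = i₀ then g else 0) := by
        intro i
        by_cases hi : i = i₀
        · subst hi; simp [hh']
        · simp [hh', Function.update_of_ne hi, hi]
      have hsynd0 : H₂.mulVec (h' i₀) = 0 := by
        rw [hupd i₀, if_pos rfl, Matrix.mulVec_add, hg]
        ext k
        exact zmod2_self_add _
      -- A of updated h
      have hA' : ∀ j, Amap M h' j = Amap M h j + M j i₀ • g := by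
        intro j
        unfold Amap
        have : ∀ i, M j i • h' i = M j i • h i + (if i = i₀ then M j i₀ • g else 0) := by
          intro i
          rw [hupd i]
          by_cases hi : i = i₀
          · subst hi; simp [smul_add]
          · simp [hi]
        rw [Finset.sum_congr rfl fun i _ => this i, Finset.sum_add_distrib,
          Finset.sum_ite_eq' Finset.univ i₀ fun _ => M j i₀ • g, if_pos (Finset.mem_univ _)]
      -- syndrome of A j for j ∈ U
      have hAsynd : ∀ j ∈ U, H₂.mulVec (Amap M h j) = H₂.mulVec (h i₀) := by
        intro j hj
        rw [hU, Finset.mem_filter] at hj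
        obtain ⟨-, hji₀, hjrest⟩ := hj
        unfold Amap
        rw [show H₂.mulVec (∑ i, M j i • h i) = ∑ i, M j i • H₂.mulVec (h i) by
          calc H₂.mulVec (∑ i, M j i • h i)
              = Matrix.mulVecLin H₂ (∑ i, M j i • h i) := rfl
            _ = ∑ i, Matrix.mulVecLin H₂ (M j i • h i) := map_sum _ _ _
            _ = ∑ i, M j i • H₂.mulVec (h i) :=
                Finset.sum_congr rfl fun i _ => (Matrix.mulVecLin H₂).map_smul _ _]
        rw [show (∑ i, M j i • H₂.mulVec (h i)) =
            ∑ i, (if i = i₀ then H₂.mulVec (h i₀) else 0) from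
          Finset.sum_congr rfl fun i _ => by
            by_cases hi : i = i₀
            · subst hi; rw [if_pos rfl, zmod2_cases _ hji₀, one_smul]
            · rw [if_neg hi]
              by_cases hiT : i ∈ T
              · rw [hjrest i hiT hi, zero_smul]
              · have : H₂.mulVec (h i) = 0 := by
                  by_contra hc
                  exact hiT (Finset.mem_filter.mpr ⟨Finset.mem_univ _, hc⟩)
                rw [this, smul_zero]]
        rw [Finset.sum_ite_eq' Finset.univ i₀ fun _ => H₂.mulVec (h i₀),
          if_pos (Finset.mem_univ _)]
      have hrhoAU : ∀ j ∈ U, rho H₂ (Amap M h j) = ρs := fun j hj =>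
        rho_congr H₂ (hAsynd j hj)
      have hrhoA'U : ∀ j ∈ U, rho H₂ (Amap M h' j) = 0 := by
        intro j hj
        apply rho_zero
        rw [hA' j]
        have hj1 : M j i₀ ≠ 0 := by
          have hj' := hj
          rw [hU, Finset.mem_filter] at hj'
          exact hj'.2.1
        rw [zmod2_cases _ hj1, one_smul, Matrix.mulVec_add, hg, hAsynd j hj]
        ext k
        exact zmod2_self_add _
      -- T of h'
      have hT' : (Finset.univ.filter fun i => H₂.mulVec (h' i) ≠ 0) = T.erase i₀ := by
        ext i
        rw [Finset.mem_filter, Finset.mem_erase]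
        constructor
        · rintro ⟨-, hne⟩
          by_cases hi : i = i₀
          · subst hi; exact absurd hsynd0 hne
          · refine ⟨hi, Finset.mem_filter.mpr ⟨Finset.mem_univ _, ?_⟩⟩
            rwa [hupd i, if_neg hi, add_zero] at hne
        · rintro ⟨hi, hiT⟩
          refine ⟨Finset.mem_univ _, ?_⟩
          rw [hupd i, if_neg hi, add_zero]
          exact (Finset.mem_filter.mp hiT).2
      have hTn' : (Finset.univ.filter fun i => H₂.mulVec (h' i) ≠ 0).card ≤ n := by
        rw [hT']
        have h1 : (T.erase i₀).card < T.card := Finset.card_erase_lt_of_mem hi₀T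
        omega
      have hTc' : ((Finset.univ.filter fun i => H₂.mulVec (h' i) ≠ 0).card : ℝ) ≤ γ * r₁ := by
        rw [hT']
        have h1 : (T.erase i₀).card ≤ T.card := Finset.card_le_card (Finset.erase_subset _ _)
        calc ((T.erase i₀).card : ℝ) ≤ (T.card : ℝ) := by exact_mod_cast h1
          _ ≤ γ * r₁ := hcard
      have hIH := IH h' hTn' hTc'
      -- sums over rows
      have hrow : ∑ i, rho H₂ (h i) = ρs + ∑ i, rho H₂ (h' i) := by
        rw [← Finset.add_sum_erase _ _ (Finset.mem_univ i₀),
          ← Finset.add_sum_erase _ (fun i => rho H₂ (h' i)) (Finset.mem_univ i₀)]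
        rw [rho_zero H₂ hsynd0, zero_add]
        have : ∑ i ∈ Finset.univ.erase i₀, rho H₂ (h' i) =
            ∑ i ∈ Finset.univ.erase i₀, rho H₂ (h i) := by
          refine Finset.sum_congr rfl fun i hi => ?_
          rw [hupd i, if_neg (Finset.mem_erase.mp hi).1, add_zero]
        rw [this, hρs]
      -- sum over columns of A'
      have hsplitA' : ∑ j, rho H₂ (Amap M h' j) =
          ∑ j ∈ Finset.univ \ U, rho H₂ (Amap M h' j) := by
        rw [← Finset.sum_sdiff (Finset.subset_univ U)]
        have : ∑ j ∈ U, rho H₂ (Amap M h' j) = 0 :=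
          Finset.sum_eq_zero hrhoA'U
        rw [this, add_zero]
      have hboundA' : ∑ j ∈ Finset.univ \ U, rho H₂ (Amap M h' j) ≤
          ∑ j ∈ Finset.univ \ U, rho H₂ (Amap M h j) + (Δ - U.card) * ρs := by
        have h1 : ∀ j ∈ Finset.univ \ U, rho H₂ (Amap M h' j) ≤
            rho H₂ (Amap M h j) + (if M j i₀ ≠ 0 then ρs else 0) := by
          intro j _
          rw [hA' j]
          by_cases hj : M j i₀ = 0
          · rw [hj, zero_smul, add_zero]
            simp [hj]
          · rw [if_pos hj, zmod2_cases _ hj, one_smul]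
            calc rho H₂ (Amap M h j + g) ≤ rho H₂ (Amap M h j) + rho H₂ g :=
                rho_add_le H₂ _ _
              _ = rho H₂ (Amap M h j) + ρs := by rw [hρg]
        calc ∑ j ∈ Finset.univ \ U, rho H₂ (Amap M h' j)
            ≤ ∑ j ∈ Finset.univ \ U, (rho H₂ (Amap M h j) + if M j i₀ ≠ 0 then ρs else 0) :=
              Finset.sum_le_sum h1
          _ = ∑ j ∈ Finset.univ \ U, rho H₂ (Amap M h j) +
              ∑ j ∈ Finset.univ \ U, (if M j i₀ ≠ 0 then ρs else 0) := Finset.sum_add_distrib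
          _ = ∑ j ∈ Finset.univ \ U, rho H₂ (Amap M h j) + (Δ - U.card) * ρs := by
              congr 1
              rw [← Finset.sum_filter]
              have h2 : (Finset.univ \ U).filter (fun j => M j i₀ ≠ 0) = Nbr \ U := by
                ext j
                simp only [Finset.mem_filter, Finset.mem_sdiff, Finset.mem_univ, true_and, hNbr]
                tauto
              rw [h2, Finset.sum_const, smul_eq_mul, Finset.card_sdiff_of_subset hUsub, hNbrcard]
      have hsplitA : ∑ j, rho H₂ (Amap M h j) =
          ∑ j ∈ Finset.univ \ U, rho H₂ (Amap M h j) + U.card * ρs := by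
        rw [← Finset.sum_sdiff (Finset.subset_univ U)]
        congr 1
        rw [Finset.sum_congr rfl hrhoAU, Finset.sum_const, smul_eq_mul]
      -- put together
      rw [hrow, hsplitA]
      have hfinal : ρs + (Δ - U.card) * ρs ≤ U.card * ρs := by
        have : 1 + (Δ - U.card) ≤ U.card := by omega
        calc ρs + (Δ - U.card) * ρs = (1 + (Δ - U.card)) * ρs := by ring
          _ ≤ U.card * ρs := Nat.mul_le_mul_right _ this
      calc ρs + ∑ i, rho H₂ (h' i)
          ≤ ρs + ∑ j, rho H₂ (Amap M h' j) := by omega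
        _ = ρs + ∑ j ∈ Finset.univ \ U, rho H₂ (Amap M h' j) := by rw [hsplitA']
        _ ≤ ρs + (∑ j ∈ Finset.univ \ U, rho H₂ (Amap M h j) + (Δ - U.card) * ρs) := by
            omega
        _ ≤ ∑ j ∈ Finset.univ \ U, rho H₂ (Amap M h j) + U.card * ρs := by omega



variable {r₁ n₁ r₂ n₂ : ℕ}

lemma kron_one_left (H₂ : Matrix (Fin r₂) (Fin n₂) (ZMod 2))
    (v : Fin r₁ × Fin n₂ → ZMod 2) (i : Fin r₁) (k : Fin r₂) :
    (((1 : Matrix (Fin r₁) (Fin r₁) (ZMod 2)) ⊗ₖ H₂).mulVec v) (i, k) =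
      H₂.mulVec (fun c => v (i, c)) k := by
  classical
  simp only [Matrix.mulVec, dotProduct, Fintype.sum_prod_type,
    Matrix.kroneckerMap_apply, Matrix.one_apply]
  rw [Finset.sum_eq_single i]
  · simp
  · intro b _ hbi
    simp [Ne.symm hbi]
  · simp

lemma kron_one_right (M : Matrix (Fin n₁) (Fin r₁) (ZMod 2))
    (v : Fin r₁ × Fin n₂ → ZMod 2) (j : Fin n₁) (c : Fin n₂) :
    ((M ⊗ₖ (1 : Matrix (Fin n₂) (Fin n₂) (ZMod 2))).mulVec v) (j, c) =
      ∑ i, M j i * v (i, c) := by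
  classical
  simp only [Matrix.mulVec, dotProduct, Fintype.sum_prod_type,
    Matrix.kroneckerMap_apply, Matrix.one_apply]
  refine Finset.sum_congr rfl fun i _ => ?_
  rw [Finset.sum_eq_single c]
  · simp
  · intro b _ hbc
    simp [Ne.symm hbc]
  · simp

lemma hn_prod {a b : ℕ} (v : Fin a × Fin b → ZMod 2) :
    hammingNorm v = ∑ x : Fin a, hammingNorm (fun y => v (x, y)) := by
  classical
  unfold hammingNorm
  rw [Finset.card_filter, Fintype.sum_prod_type]
  exact Finset.sum_congr rfl fun x _ => (Finset.card_filter _ _).symm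


end HGPaux


/-- **"Soundness" of hypergraph-product codes (Lemma: HGP_soundness).**
Let `H₁ ∈ F₂^{r₁×n₁}`, `H₂ ∈ F₂^{r₂×n₂}`, with `H₁ᵀ` a `(γ,δ)`-expander (`δ < 1/4`,
column-regular of degree `Δ`).  For `D̃_Z = (H₁ ⊗ I_{n₂} | I_{r₁} ⊗ H₂ᵀ)` and any
`h ∈ F₂^{r₁ n₂}`, the vector `f = D̃_Zᵀ h` (whose two components are
`(H₁ᵀ ⊗ I_{n₂}) h` and `(I_{r₁} ⊗ H₂) h`) satisfies
`|f| ≥ min{ |h|ʳ_{I_{r₁}⊗H₂}, d(H₁ᵀ), γ·r₁ }`,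
where the classical distance `d(H₁ᵀ)` is `+∞` when `H₁ᵀ` has trivial kernel. -/
theorem stmt_6 (r₁ n₁ r₂ n₂ : ℕ)
    (H₁ : Matrix (Fin r₁) (Fin n₁) (ZMod 2))
    (H₂ : Matrix (Fin r₂) (Fin n₂) (ZMod 2))
    (γ δ : ℝ) (hδ : δ < 1 / 4) (Δ : ℕ)
    (hreg : ∀ j : Fin r₁, hammingNorm (fun i : Fin n₁ => H₁ᵀ i j) = Δ)
    (hexp : ∀ S : Finset (Fin r₁), (S.card : ℝ) ≤ γ * r₁ →
      (1 - δ) * Δ * S.card ≤ (({i : Fin n₁ | ∃ j ∈ S, H₁ᵀ i j ≠ 0} : Set (Fin n₁)).ncard : ℝ))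
    (h : Fin r₁ × Fin n₂ → ZMod 2) :
    min (min
        (((sInf {w : ℕ | ∃ h' : Fin r₁ × Fin n₂ → ZMod 2,
          ((1 : Matrix (Fin r₁) (Fin r₁) (ZMod 2)) ⊗ₖ H₂).mulVec h' =
            ((1 : Matrix (Fin r₁) (Fin r₁) (ZMod 2)) ⊗ₖ H₂).mulVec h ∧
          hammingNorm h' = w} : ℕ) : ℝ≥0∞))
        (sInf {x : ℝ≥0∞ | ∃ w : Fin r₁ → ZMod 2,
          w ≠ 0 ∧ H₁ᵀ.mulVec w = 0 ∧ x = (hammingNorm w : ℝ≥0∞)}))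
      (ENNReal.ofReal (γ * r₁)) ≤
    ((hammingNorm ((H₁ᵀ ⊗ₖ (1 : Matrix (Fin n₂) (Fin n₂) (ZMod 2))).mulVec h) +
      hammingNorm (((1 : Matrix (Fin r₁) (Fin r₁) (ZMod 2)) ⊗ₖ H₂).mulVec h) : ℕ) : ℝ≥0∞) := by
  classical
  set M : Matrix (Fin n₁) (Fin r₁) (ZMod 2) := H₁ᵀ with hM
  set Avec := (H₁ᵀ ⊗ₖ (1 : Matrix (Fin n₂) (Fin n₂) (ZMod 2))).mulVec h with hAvec
  set Bvec := ((1 : Matrix (Fin r₁) (Fin r₁) (ZMod 2)) ⊗ₖ H₂).mulVec h with hBvec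
  set N : ℕ := hammingNorm Avec + hammingNorm Bvec with hN
  set hr : Fin r₁ → Fin n₂ → ZMod 2 := fun i c => h (i, c) with hhr
  have hBrow : ∀ i, (fun k => Bvec (i, k)) = H₂.mulVec (hr i) := by
    intro i
    funext k
    exact HGPaux.kron_one_left H₂ h i k
  have hnB : hammingNorm Bvec = ∑ i, hammingNorm (H₂.mulVec (hr i)) := by
    rw [HGPaux.hn_prod Bvec]
    exact Finset.sum_congr rfl fun i _ => by rw [hBrow i]
  have hArow : ∀ j, (fun c => Avec (j, c)) = HGPaux.Amap M hr j := by
    intro j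
    funext c
    rw [show Avec (j, c) = ∑ i, M j i * h (i, c) from HGPaux.kron_one_right H₁ᵀ h j c]
    rw [HGPaux.Amap, Finset.sum_apply]
    exact Finset.sum_congr rfl fun i _ => by simp [smul_eq_mul, hhr]
  have hnA : hammingNorm Avec = ∑ j, hammingNorm (HGPaux.Amap M hr j) := by
    rw [HGPaux.hn_prod Avec]
    exact Finset.sum_congr rfl fun j _ => by rw [hArow j]
  -- branch helpers
  have aBranch : ∀ w : ℕ, w ∈ {w : ℕ | ∃ h' : Fin r₁ × Fin n₂ → ZMod 2,
        ((1 : Matrix (Fin r₁) (Fin r₁) (ZMod 2)) ⊗ₖ H₂).mulVec h' = Bvec ∧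
        hammingNorm h' = w} → w ≤ N →
      min (min
        (((sInf {w : ℕ | ∃ h' : Fin r₁ × Fin n₂ → ZMod 2,
          ((1 : Matrix (Fin r₁) (Fin r₁) (ZMod 2)) ⊗ₖ H₂).mulVec h' = Bvec ∧
          hammingNorm h' = w} : ℕ) : ℝ≥0∞))
        (sInf {x : ℝ≥0∞ | ∃ w : Fin r₁ → ZMod 2,
          w ≠ 0 ∧ H₁ᵀ.mulVec w = 0 ∧ x = (hammingNorm w : ℝ≥0∞)}))
      (ENNReal.ofReal (γ * r₁)) ≤ ((N : ℕ) : ℝ≥0∞) := by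
    intro w hw hwN
    refine le_trans (le_trans (min_le_left _ _) (min_le_left _ _)) ?_
    exact_mod_cast Nat.cast_le.mpr (le_trans (Nat.sInf_le hw) hwN)
  rcases Nat.eq_zero_or_pos Δ with hΔ0 | hΔpos
  · -- degenerate case Δ = 0
    by_cases hB : Bvec = 0
    · refine aBranch 0 ⟨0, ?_, hammingNorm_zero⟩ (Nat.zero_le _)
      rw [Matrix.mulVec_zero, hB]
    · obtain ⟨p, hp⟩ := Function.ne_iff.mp hB
      have hp' : Bvec p ≠ 0 := by simpa using hp
      have hBpos : 1 ≤ hammingNorm Bvec := by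
        rw [Nat.one_le_iff_ne_zero]
        intro h0
        exact hp' (congrFun (hammingNorm_eq_zero.mp h0) p)
      set i₀ := p.1 with hi₀
      set w : Fin r₁ → ZMod 2 := fun i => if i = i₀ then 1 else 0 with hw
      have hw0 : w ≠ 0 := by
        refine Function.ne_iff.mpr ⟨i₀, ?_⟩
        simp [hw]
      have hcol : (fun i : Fin n₁ => H₁ᵀ i i₀) = 0 :=
        hammingNorm_eq_zero.mp (by rw [hreg i₀, hΔ0])
      have hker : H₁ᵀ.mulVec w = 0 := by
        funext j
        rw [Matrix.mulVec, dotProduct]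
        rw [Finset.sum_eq_single i₀]
        · have hcj : H₁ i₀ j = 0 := congrFun hcol j
          simp [hw, hcj]
        · intro b _ hb
          simp [hw, hb]
        · simp
      have hwn : hammingNorm w = 1 := by
        unfold hammingNorm
        rw [show (Finset.univ.filter fun i => w i ≠ 0) = {i₀} by
          ext i
          by_cases hi : i = i₀ <;> simp [hw, hi]]
        exact Finset.card_singleton i₀
      refine le_trans (le_trans (min_le_left _ _) (min_le_right _ _)) ?_
      refine le_trans (sInf_le ⟨w, hw0, hker, rfl⟩) ?_
      rw [hwn]
      exact_mod_cast Nat.cast_le.mpr (le_trans hBpos (Nat.le_add_left _ _))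
  · -- main case Δ ≥ 1
    have hexp' : ∀ S : Finset (Fin r₁), (S.card : ℝ) ≤ γ * r₁ →
        (1 - δ) * Δ * S.card ≤
          ((Finset.univ.filter fun j : Fin n₁ => ∃ i ∈ S, M j i ≠ 0).card : ℝ) := by
      intro S hS
      have h0 := hexp S hS
      have hset : {i : Fin n₁ | ∃ j ∈ S, H₁ᵀ i j ≠ 0} =
          ↑(Finset.univ.filter fun i : Fin n₁ => ∃ j ∈ S, H₁ᵀ i j ≠ 0) := by
        ext x; rw [Finset.mem_coe, Finset.mem_filter]; simp
      rw [hset, Set.ncard_coe_finset] at h0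
      exact h0
    set T : Finset (Fin r₁) := Finset.univ.filter fun i => H₂.mulVec (hr i) ≠ 0 with hT
    by_cases hTc : (T.card : ℝ) ≤ γ * r₁
    · -- first branch via main lemma
      have hmain := HGPaux.main H₂ M γ δ Δ hδ hΔpos hreg hexp' T.card hr le_rfl hTc
      choose g hg1 hg2 using fun i => HGPaux.rho_spec H₂ (hr i)
      set h' : Fin r₁ × Fin n₂ → ZMod 2 := fun p => g p.1 p.2 with hh'
      have hsynd : ((1 : Matrix (Fin r₁) (Fin r₁) (ZMod 2)) ⊗ₖ H₂).mulVec h' = Bvec := by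
        funext p
        obtain ⟨i, k⟩ := p
        rw [HGPaux.kron_one_left H₂ h' i k, hBvec, HGPaux.kron_one_left H₂ h i k]
        exact congrFun (hg1 i) k
      have hnh' : hammingNorm h' = ∑ i, HGPaux.rho H₂ (hr i) := by
        rw [HGPaux.hn_prod h']
        exact Finset.sum_congr rfl fun i _ => hg2 i
      refine aBranch (hammingNorm h') ⟨h', hsynd, rfl⟩ ?_
      calc hammingNorm h' = ∑ i, HGPaux.rho H₂ (hr i) := hnh'
        _ ≤ ∑ j, HGPaux.rho H₂ (HGPaux.Amap M hr j) := hmain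
        _ ≤ ∑ j, hammingNorm (HGPaux.Amap M hr j) :=
            Finset.sum_le_sum fun j _ => HGPaux.rho_le_norm H₂ _
        _ = hammingNorm Avec := hnA.symm
        _ ≤ N := Nat.le_add_right _ _
    · -- third branch
      push_neg at hTc
      have hTB : T.card ≤ hammingNorm Bvec := by
        rw [hnB]
        calc T.card = ∑ _i ∈ T, 1 := by rw [Finset.sum_const, smul_eq_mul, mul_one]
          _ ≤ ∑ i ∈ T, hammingNorm (H₂.mulVec (hr i)) := by
              refine Finset.sum_le_sum fun i hi => ?_
              rw [Nat.one_le_iff_ne_zero]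
              intro h0
              have := hammingNorm_eq_zero.mp h0
              rw [hT, Finset.mem_filter] at hi
              exact hi.2 this
          _ ≤ ∑ i, hammingNorm (H₂.mulVec (hr i)) :=
              Finset.sum_le_sum_of_subset (Finset.subset_univ _)
      refine le_trans (min_le_right _ _) ?_
      calc ENNReal.ofReal (γ * r₁) ≤ ENNReal.ofReal (T.card : ℝ) :=
            ENNReal.ofReal_le_ofReal hTc.le
        _ = ((T.card : ℕ) : ℝ≥0∞) := ENNReal.ofReal_natCast _
        _ ≤ ((N : ℕ) : ℝ≥0∞) :=
            Nat.cast_le.mpr (le_trans hTB (Nat.le_add_left _ _))
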